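/- For x ∈ Σ in the 2-cylinder [ab] (a,b ∈ {0,1}), the sequence (σ∘H)^{2k}(x) converges to a·ρ_b and (σ∘H)^{2k+1}(x) converges to ā·ρ_b as k → ∞, where ā = 1−a; in particular the set of accumulation points of ((σ∘H)ᵏ(x))_k is {0ρ_b, 1ρ_b}. -/

import Mathlib

open Filter Topology MeasureTheory

/-- The left shift on the full 2-shift `Σ = {0,1}^ℕ`. -/
def shift (x : ℕ → Bool) : ℕ → Bool := fun n => x (n + 1)

/-- The Thue–Morse substitution `H : 0 → 01, 1 → 10`, acting on sequences. -/
def subH (x : ℕ → Bool) : ℕ → Bool :=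
  fun n => if n % 2 = 0 then x (n / 2) else !x (n / 2)

/-- The Thue–Morse sequence: `tm n` is the parity of the number of 1s in
the binary expansion of `n`. -/
def tm (n : ℕ) : Bool := (Nat.digits 2 n).count 1 % 2 == 1

/-- The fixed point of `subH` starting with 0. -/
def rho0 : ℕ → Bool := tm

/-- The fixed point of `subH` starting with 1. -/
def rho1 : ℕ → Bool := fun n => !tm n

/-- `rhoB b` is the fixed point of `subH` starting with digit `b`. -/
def rhoB : Bool → ℕ → Bool
  | false => rho0
  | true => rho1

/-- The digit-flipping involution. -/
def flipSeq (x : ℕ → Bool) : ℕ → Bool := fun n => !x n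

/-- Prepend a digit to a sequence. -/
def consTM (a : Bool) (x : ℕ → Bool) : ℕ → Bool
  | 0 => a
  | n + 1 => x n

/-- The Thue–Morse subshift: the closure of the shift orbit of `rho0`. -/
def TMK : Set (ℕ → Bool) := closure {y | ∃ n, y = shift^[n] rho0}

/-- The renormalization operator `𝓡V = V ∘ σ ∘ H + V ∘ H`. -/
def RenOp (V : (ℕ → Bool) → ℝ) : (ℕ → Bool) → ℝ :=
  fun x => V (shift (subH x)) + V (subH x)

/-- The Birkhoff sum `S_k V = ∑_{i<k} V ∘ σⁱ`. -/
def birkhoff (V : (ℕ → Bool) → ℝ) (k : ℕ) (x : ℕ → Bool) : ℝ :=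
  ∑ i ∈ Finset.range k, V (shift^[i] x)

/-- The potential `U_c`: value `c` on `[01]`, `-c` on `[10]`, `0` on `[00] ∪ [11]`. -/
def Upot (c : ℝ) (x : ℕ → Bool) : ℝ :=
  if x 0 = false ∧ x 1 = true then c
  else if x 0 = true ∧ x 1 = false then -c else 0

/-- The sliding block code `π(x)_k = 1` iff `x_k ≠ x_{k+1}`. -/
def piTM (x : ℕ → Bool) : ℕ → Bool := fun n => x n != x (n + 1)

/-- The Feigenbaum substitution `0 → 11, 1 → 10`, acting on sequences. -/
def subHfeig (x : ℕ → Bool) : ℕ → Bool :=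
  fun n => if n % 2 = 0 then true else !x (n / 2)


lemma tm_two_mul (m : ℕ) : tm (2 * m) = tm m := by
  rcases Nat.eq_zero_or_pos m with rfl | hm
  · rfl
  · unfold tm
    rw [Nat.digits_def' (b := 2) (by norm_num) (by omega)]
    have h1 : 2 * m % 2 = 0 := by omega
    have h2 : 2 * m / 2 = m := by omega
    rw [h1, h2]
    simp [List.count_cons]

lemma tm_two_mul_add_one (m : ℕ) : tm (2 * m + 1) = !tm m := by
  unfold tm
  rw [Nat.digits_def' (b := 2) (by norm_num) (by omega)]
  have h1 : (2 * m + 1) % 2 = 1 := by omega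
  have h2 : (2 * m + 1) / 2 = m := by omega
  rw [h1, h2]
  rw [List.count_cons_self]
  generalize (Nat.digits 2 m).count 1 = c
  rcases Nat.mod_two_eq_zero_or_one c with h | h <;> rw [Nat.add_mod, h] <;> simp

lemma rhoB_zero (b : Bool) : rhoB b 0 = b := by
  cases b <;> simp [rhoB, rho0, rho1, tm]

lemma rhoB_even (b : Bool) (m : ℕ) : rhoB b (2 * m) = rhoB b m := by
  cases b <;> simp [rhoB, rho0, rho1, tm_two_mul]

lemma rhoB_odd (b : Bool) (m : ℕ) : rhoB b (2 * m + 1) = !rhoB b m := by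
  cases b <;> simp [rhoB, rho0, rho1, tm_two_mul_add_one]

lemma agree_step {x y : ℕ → Bool} {s : ℕ} (h : ∀ n ≤ s, x n = y n) :
    ∀ n ≤ 2 * s, (shift ∘ subH) x n = (shift ∘ subH) y n := by
  intro n hn
  have hle : (n + 1) / 2 ≤ s := by omega
  simp only [Function.comp, shift, subH]
  by_cases hp : (n + 1) % 2 = 0 <;> simp [hp, h _ hle]

lemma agree_iter {x y : ℕ → Bool} (h : ∀ n ≤ 1, x n = y n) :
    ∀ k, ∀ n ≤ 2 ^ k, (shift ∘ subH)^[k] x n = (shift ∘ subH)^[k] y n := by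
  intro k
  induction k with
  | zero => simpa using h
  | succ k ih =>
    intro n hn
    rw [Function.iterate_succ_apply', Function.iterate_succ_apply']
    exact agree_step ih n (by rw [pow_succ] at hn; omega)

lemma T_cons (a b : Bool) :
    (shift ∘ subH) (consTM a (rhoB b)) = consTM (!a) (rhoB b) := by
  funext n
  cases n with
  | zero =>
    show subH (consTM a (rhoB b)) 1 = !a
    simp [subH, consTM]
  | succ n =>
    show subH (consTM a (rhoB b)) (n + 2) = rhoB b n
    unfold subH
    have h2 : (n + 2) / 2 = n / 2 + 1 := by omega
    by_cases hp : (n + 2) % 2 = 0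
    · rw [if_pos hp, h2]
      show rhoB b (n / 2) = rhoB b n
      have hn : 2 * (n / 2) = n := by omega
      conv_rhs => rw [← hn]
      rw [rhoB_even]
    · rw [if_neg hp, h2]
      show (!rhoB b (n / 2)) = rhoB b n
      have hn : 2 * (n / 2) + 1 = n := by omega
      conv_rhs => rw [← hn]
      rw [rhoB_odd]

lemma T_cons_fix (a b : Bool) (k : ℕ) :
    (shift ∘ subH)^[2 * k] (consTM a (rhoB b)) = consTM a (rhoB b) := by
  have h2 : (shift ∘ subH)^[2] (consTM a (rhoB b)) = consTM a (rhoB b) := by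
    show (shift ∘ subH) ((shift ∘ subH) (consTM a (rhoB b))) = consTM a (rhoB b)
    rw [T_cons, T_cons, Bool.not_not]
  rw [Function.iterate_mul]
  exact Function.iterate_fixed h2 k

lemma tendsto_double_mul : Tendsto (fun k : ℕ => 2 * k) atTop atTop :=
  tendsto_atTop_atTop_of_monotone (fun _ _ h => by omega) (fun n => ⟨n, by omega⟩)

lemma tendsto_double_mul_add_one : Tendsto (fun k : ℕ => 2 * k + 1) atTop atTop :=
  tendsto_atTop_atTop_of_monotone (fun _ _ h => by omega) (fun n => ⟨n, by omega⟩)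

/-- for `x ∈ [ab]`, the even iterates `(σ∘H)^{2k}(x)` converge to `a·ρ_b`,
the odd iterates to `ā·ρ_b`, and the set of accumulation points of `((σ∘H)ᵏx)_k`
is `{0·ρ_b, 1·ρ_b}`. -/
theorem stmt7 (x : ℕ → Bool) (a b : Bool) (ha : x 0 = a) (hb : x 1 = b) :
    Tendsto (fun k => (shift ∘ subH)^[2 * k] x) atTop (nhds (consTM a (rhoB b))) ∧
    Tendsto (fun k => (shift ∘ subH)^[2 * k + 1] x) atTop (nhds (consTM (!a) (rhoB b))) ∧
    {p | MapClusterPt p atTop (fun k => (shift ∘ subH)^[k] x)} =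
      {consTM false (rhoB b), consTM true (rhoB b)} := by
  set y : ℕ → Bool := consTM a (rhoB b) with hy
  have hagree : ∀ n ≤ 1, x n = y n := by
    intro n hn
    interval_cases n
    · simpa [hy, consTM] using ha
    · rw [hb]; show b = rhoB b 0; rw [rhoB_zero]
  have key : ∀ j n : ℕ, ∀ᶠ k in atTop,
      (shift ∘ subH)^[2 * k + j] x n = (shift ∘ subH)^[j] y n := by
    intro j n
    filter_upwards [eventually_ge_atTop n] with k hk
    have hle : n ≤ 2 ^ (2 * k + j) :=
      le_of_lt (lt_of_lt_of_le (Nat.lt_two_pow_self (n := n))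
        (pow_le_pow_right₀ one_le_two (by omega)))
    rw [agree_iter hagree (2 * k + j) n hle, add_comm,
      Function.iterate_add_apply, T_cons_fix]
  have heven : Tendsto (fun k => (shift ∘ subH)^[2 * k] x) atTop (𝓝 y) := by
    rw [tendsto_pi_nhds]
    intro n
    have he : (fun _ : ℕ => y n) =ᶠ[atTop]
        (fun k => (shift ∘ subH)^[2 * k] x n) := by
      filter_upwards [key 0 n] with k hk
      simpa using hk.symm
    exact tendsto_const_nhds.congr' he
  have hodd : Tendsto (fun k => (shift ∘ subH)^[2 * k + 1] x) atTop
      (𝓝 (consTM (!a) (rhoB b))) := by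
    rw [tendsto_pi_nhds]
    intro n
    have he : (fun _ : ℕ => consTM (!a) (rhoB b) n) =ᶠ[atTop]
        (fun k => (shift ∘ subH)^[2 * k + 1] x n) := by
      filter_upwards [key 1 n] with k hk
      rw [hk, Function.iterate_one, hy, T_cons]
    exact tendsto_const_nhds.congr' he
  refine ⟨heven, hodd, ?_⟩
  set u : ℕ → (ℕ → Bool) := fun k => (shift ∘ subH)^[k] x with hu
  have hmape : map (fun k => (shift ∘ subH)^[2 * k] x) atTop ≤ map u atTop := by
    have : (fun k => (shift ∘ subH)^[2 * k] x) = u ∘ (fun k => 2 * k) := rfl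
    rw [this, ← Filter.map_map]
    exact map_mono tendsto_double_mul
  have hmapo : map (fun k => (shift ∘ subH)^[2 * k + 1] x) atTop ≤ map u atTop := by
    have : (fun k => (shift ∘ subH)^[2 * k + 1] x) = u ∘ (fun k => 2 * k + 1) := rfl
    rw [this, ← Filter.map_map]
    exact map_mono tendsto_double_mul_add_one
  have hcp0 : MapClusterPt y atTop u :=
    ClusterPt.mono heven.mapClusterPt hmape
  have hcp1 : MapClusterPt (consTM (!a) (rhoB b)) atTop u :=
    ClusterPt.mono hodd.mapClusterPt hmapo
  ext p
  simp only [Set.mem_setOf_eq, Set.mem_insert_iff, Set.mem_singleton_iff]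
  constructor
  · intro hp
    have hle : map u atTop ≤ 𝓝 y ⊔ 𝓝 (consTM (!a) (rhoB b)) := by
      intro s hs
      obtain ⟨hs0, hs1⟩ := Filter.mem_sup.mp hs
      have h0 : ∀ᶠ k in atTop, (shift ∘ subH)^[2 * k] x ∈ s := heven hs0
      have h1 : ∀ᶠ k in atTop, (shift ∘ subH)^[2 * k + 1] x ∈ s := hodd hs1
      obtain ⟨N0, hN0⟩ := eventually_atTop.mp h0
      obtain ⟨N1, hN1⟩ := eventually_atTop.mp h1
      have : ∀ᶠ m in atTop, u m ∈ s := by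
        filter_upwards [eventually_ge_atTop (2 * N0 + 2 * N1 + 1)] with m hm
        rcases Nat.even_or_odd m with ⟨k, hk⟩ | ⟨k, hk⟩
        · have hm2 : m = 2 * k := by omega
          have hkN : N0 ≤ k := by omega
          rw [hm2]
          exact hN0 k hkN
        · have hm2 : m = 2 * k + 1 := by omega
          have hkN : N1 ≤ k := by omega
          rw [hm2]
          exact hN1 k hkN
      exact this
    have hcl : ClusterPt p (𝓝 y ⊔ 𝓝 (consTM (!a) (rhoB b))) :=
      ClusterPt.mono hp hle
    rw [ClusterPt, inf_sup_left, Filter.sup_neBot] at hcl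
    have : p = y ∨ p = consTM (!a) (rhoB b) := by
      rcases hcl with h | h
      · exact Or.inl (eq_of_nhds_neBot h)
      · exact Or.inr (eq_of_nhds_neBot h)
    cases a with
    | false => rcases this with rfl | rfl
               · exact Or.inl rfl
               · exact Or.inr rfl
    | true => rcases this with rfl | rfl
              · exact Or.inr rfl
              · exact Or.inl rfl
  · intro hp
    cases a with
    | false =>
      rcases hp with rfl | rfl
      · exact hcp0
      · exact hcp1
    | true =>
      rcases hp with rfl | rfl
      · exact hcp1
      · exact hcp0
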